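/- (Steady-state correlation between the error and its Ornstein–Uhlenbeck approximation.) Fix a node k ∈ {1,…,n}. Define f(t) = Σ_{p=1}^n ((1 − e^{−2λ̃_p t})/(2λ̃_p))·(ũ_k⁽ᵖ⁾)² − 2(1 − e^{−μ_k t/2})/(n μ_k) (the cross-covariance E[ε_k(t)ε̃_k(t)]), g(t) = Σ_{p=2}^n ((1 − e^{−2λ_p t})/(2λ_p))·(u_k⁽ᵖ⁾)² (the variance of ε_k(t)), and h(t) = (1 − e^{−μ_k t})/μ_k (the variance of ε̃_k(t)). Then lim_{t→∞} f(t)/√(g(t)·h(t)) = μ_k · Σ_{p=1}^n (ũ_k⁽ᵖ⁾)²/(2λ̃_p) − 2/n. -/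

import Mathlib

open Finset Filter Matrix

/-- **Steady-state correlation between the error and its O–U approximation.**
With `f(t) = Σ_p ((1 − e^{−2λ̃_p t})/(2λ̃_p))·(ũ_k⁽ᵖ⁾)² − 2(1 − e^{−μ_k t/2})/(n μ_k)`
(the cross-covariance), `g(t) = Σ_{p≠1} ((1 − e^{−2λ_p t})/(2λ_p))·(u_k⁽ᵖ⁾)²` (the variance of
`ε_k(t)`) and `h(t) = (1 − e^{−μ_k t})/μ_k` (the variance of `ε̃_k(t)`),
`f(t)/√(g(t)h(t)) → μ_k Σ_p (ũ_k⁽ᵖ⁾)²/(2λ̃_p) − 2/n` as `t → ∞`. -/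

private lemma exp_neg_tendsto (c : ℝ) (hc : 0 < c) :
    Tendsto (fun t : ℝ => Real.exp (-c * t)) atTop (nhds 0) := by
  have h1 : Tendsto (fun t : ℝ => c * t) atTop atTop :=
    Tendsto.const_mul_atTop hc tendsto_id
  have := Real.tendsto_exp_neg_atTop_nhds_zero.comp h1
  simpa [Function.comp_def, neg_mul] using this

theorem coupledDDM_steady_state_correlation
    (n : ℕ) [NeZero n] (hn : 2 ≤ n)
    (L : Matrix (Fin n) (Fin n) ℝ)
    (hsymm : L.IsSymm) (hpsd : L.PosSemidef)
    (hL1 : L *ᵥ (fun _ => (1 : ℝ)) = 0)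
    (hker : ∀ v : Fin n → ℝ, L *ᵥ v = 0 → ∃ c : ℝ, v = fun _ => c)
    (lam : Fin n → ℝ) (u : Fin n → Fin n → ℝ)
    (hlam0 : lam 0 = 0)
    (hlampos : ∀ p : Fin n, p ≠ 0 → 0 < lam p)
    (hmono : Monotone lam)
    (heig : ∀ p : Fin n, L *ᵥ u p = lam p • u p)
    (horth : ∀ p q : Fin n, ∑ j, u p j * u q j = if p = q then (1 : ℝ) else 0)
    (hu0 : u 0 = fun _ => 1 / Real.sqrt n)
    (mu : Fin n → ℝ) (hmupos : ∀ k, 0 < mu k)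
    (hmu : ∀ k, 1 / mu k = ∑ p ∈ Finset.univ.erase (0 : Fin n), (u p k) ^ 2 / (2 * lam p))
    (tlam : Fin n → ℝ) (tu : Fin n → Fin n → ℝ)
    (htpos : (L + Matrix.diagonal (fun j => mu j / 2)).PosDef)
    (htlampos : ∀ p : Fin n, 0 < tlam p)
    (hteig : ∀ p : Fin n, (L + Matrix.diagonal (fun j => mu j / 2)) *ᵥ tu p = tlam p • tu p)
    (htorth : ∀ p q : Fin n, ∑ j, tu p j * tu q j = if p = q then (1 : ℝ) else 0)
    (k : Fin n) :
    Tendsto (fun t : ℝ =>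
        ((∑ p : Fin n, (1 - Real.exp (-2 * tlam p * t)) / (2 * tlam p) * (tu p k) ^ 2)
            - 2 * (1 - Real.exp (-(mu k) * t / 2)) / (n * mu k)) /
          Real.sqrt
            ((∑ p ∈ Finset.univ.erase (0 : Fin n),
                (1 - Real.exp (-2 * lam p * t)) / (2 * lam p) * (u p k) ^ 2) *
              ((1 - Real.exp (-(mu k) * t)) / mu k)))
      atTop
      (nhds (mu k * ∑ p : Fin n, (tu p k) ^ 2 / (2 * tlam p) - 2 / n)) := by

  have hmuk := hmupos k
  -- limit of f
  have hf : Tendsto (fun t : ℝ =>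
      (∑ p : Fin n, (1 - Real.exp (-2 * tlam p * t)) / (2 * tlam p) * (tu p k) ^ 2)
        - 2 * (1 - Real.exp (-(mu k) * t / 2)) / (n * mu k)) atTop
      (nhds ((∑ p : Fin n, (tu p k) ^ 2 / (2 * tlam p)) - 2 / (n * mu k))) := by
    apply Tendsto.sub
    · apply tendsto_finset_sum
      intro p _
      have hl := htlampos p
      have he : Tendsto (fun t : ℝ => Real.exp (-2 * tlam p * t)) atTop (nhds 0) := by
        have := exp_neg_tendsto (2 * tlam p) (by linarith)
        simpa [neg_mul, mul_assoc] using this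
      have : Tendsto (fun t : ℝ => (1 - Real.exp (-2 * tlam p * t)) / (2 * tlam p) * (tu p k) ^ 2)
          atTop (nhds ((1 - 0) / (2 * tlam p) * (tu p k) ^ 2)) :=
        (((tendsto_const_nhds).sub he).div_const _).mul_const _
      convert this using 2
      field_simp
      ring
    · have he : Tendsto (fun t : ℝ => Real.exp (-(mu k) * t / 2)) atTop (nhds 0) := by
        have := exp_neg_tendsto (mu k / 2) (by linarith)
        have heq : (fun t : ℝ => Real.exp (-(mu k) * t / 2)) = (fun t : ℝ => Real.exp (-(mu k / 2) * t)) := by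
          funext t; ring_nf
        rw [heq]; exact this
      have : Tendsto (fun t : ℝ => 2 * (1 - Real.exp (-(mu k) * t / 2)) / (n * mu k))
          atTop (nhds (2 * (1 - 0) / (n * mu k))) :=
        (((tendsto_const_nhds).sub he).const_mul 2).div_const _
      convert this using 2
      ring
  -- limit of g
  have hg : Tendsto (fun t : ℝ => ∑ p ∈ Finset.univ.erase (0 : Fin n),
      (1 - Real.exp (-2 * lam p * t)) / (2 * lam p) * (u p k) ^ 2) atTop (nhds (1 / mu k)) := by
    rw [hmu k]
    apply tendsto_finset_sum
    intro p hp
    have hl := hlampos p (Finset.ne_of_mem_erase hp)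
    have he : Tendsto (fun t : ℝ => Real.exp (-2 * lam p * t)) atTop (nhds 0) := by
      have := exp_neg_tendsto (2 * lam p) (by linarith)
      simpa [neg_mul, mul_assoc] using this
    have : Tendsto (fun t : ℝ => (1 - Real.exp (-2 * lam p * t)) / (2 * lam p) * (u p k) ^ 2)
        atTop (nhds ((1 - 0) / (2 * lam p) * (u p k) ^ 2)) :=
      (((tendsto_const_nhds).sub he).div_const _).mul_const _
    convert this using 2
    field_simp
    ring
  -- limit of h
  have hh : Tendsto (fun t : ℝ => (1 - Real.exp (-(mu k) * t)) / mu k) atTop (nhds (1 / mu k)) := by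
    have he := exp_neg_tendsto (mu k) hmuk
    have : Tendsto (fun t : ℝ => (1 - Real.exp (-(mu k) * t)) / mu k)
        atTop (nhds ((1 - 0) / mu k)) := ((tendsto_const_nhds).sub he).div_const _
    simpa using this
  -- denominator limit
  have hsq : Tendsto (fun t : ℝ => Real.sqrt
      ((∑ p ∈ Finset.univ.erase (0 : Fin n),
          (1 - Real.exp (-2 * lam p * t)) / (2 * lam p) * (u p k) ^ 2) *
        ((1 - Real.exp (-(mu k) * t)) / mu k))) atTop (nhds (1 / mu k)) := by
    have := (hg.mul hh).sqrt
    rwa [Real.sqrt_mul_self (by positivity : (0:ℝ) ≤ 1 / mu k)] at this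
  have hne : (1 : ℝ) / mu k ≠ 0 := by positivity
  have := hf.div hsq hne
  convert this using 2
  · rfl
  have hn0 : (n : ℝ) ≠ 0 := by
    have : (0:ℕ) < n := by omega
    exact_mod_cast this.ne'
  field_simp
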